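/- Fix integers K ≥ 1, M ≥ 2, and m ∈ [M]. Let 𝓜 = {(m₁, m₂) ∈ [M]² : m₁ < m₂} and for (g,h) ∈ 𝓜^K define degree_{m'}(g,h) = Σ_{k=1}^K (1[g_k = m'] + 1[h_k = m']). Let 𝓔 = {(g,h) ∈ 𝓜^K : degree_{m'}(g,h) is even for all m' ∈ [M]} and 𝓔_m = {(g,h) ∈ 𝓔 : degree_m(g,h) > 0}. Then |𝓔_m| ≤ (2K)! · binom(3K, 2K) · Σ_{ℓ=1}^{K} binom(M, ℓ−1); in particular there is a constant C(K) depending only on K with |𝓔_m| ≤ C(K)·M^{K−1}. -/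

import Mathlib

open Finset

section Aux

/-- The number of functions `Fin n → Fin k` is at most `n! · C(n+k, n)`:
encode `f` as the sorting permutation together with the set `{f(σ i) + i}`. -/
lemma pow_le_factorial_mul_choose (n k : ℕ) :
    k ^ n ≤ n.factorial * (n + k).choose n := by
  rcases Nat.eq_zero_or_pos k with hk | hk
  · subst hk
    rcases Nat.eq_zero_or_pos n with hn | hn
    · subst hn; simp
    · rw [Nat.zero_pow hn]
      exact Nat.zero_le _
  · classical
    have hnk : 0 < n + k := by omega
    set ψ : (Fin n → Fin k) → Fin n → Fin (n + k) := fun f i =>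
      ⟨(f (Tuple.sort f i)).val + i.val, by
        have h1 := (f (Tuple.sort f i)).isLt
        have h2 := i.isLt
        omega⟩ with hψ
    have hmono : ∀ f, StrictMono (ψ f) := by
      intro f i j hij
      have hle : (f (Tuple.sort f i)) ≤ (f (Tuple.sort f j)) :=
        Tuple.monotone_sort f hij.le
      have : (f (Tuple.sort f i)).val + i.val < (f (Tuple.sort f j)).val + j.val := by
        have h3 : (f (Tuple.sort f i)).val ≤ (f (Tuple.sort f j)).val := hle
        have h4 : i.val < j.val := hij
        omega
      exact this
    set Φ : (Fin n → Fin k) → Equiv.Perm (Fin n) × Finset (Fin (n + k)) := fun f =>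
      (Tuple.sort f, Finset.image (ψ f) Finset.univ) with hΦ
    have hcardim : ∀ f, (Finset.image (ψ f) Finset.univ).card = n := by
      intro f
      rw [Finset.card_image_of_injective _ (hmono f).injective, Finset.card_univ,
        Fintype.card_fin]
    have hinj : Function.Injective Φ := by
      intro f f' h
      have hσ : Tuple.sort f = Tuple.sort f' := congrArg Prod.fst h
      have hA : Finset.image (ψ f) Finset.univ = Finset.image (ψ f') Finset.univ :=
        congrArg Prod.snd h
      have e1 : ψ f = (Finset.image (ψ f) Finset.univ).orderEmbOfFin (hcardim f) :=
        Finset.orderEmbOfFin_unique (hcardim f)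
          (fun x => Finset.mem_image_of_mem _ (Finset.mem_univ x)) (hmono f)
      have e2 : ψ f' = (Finset.image (ψ f) Finset.univ).orderEmbOfFin (hcardim f) := by
        apply Finset.orderEmbOfFin_unique (hcardim f)
          (fun x => by rw [hA]; exact Finset.mem_image_of_mem _ (Finset.mem_univ x)) (hmono f')
      have eψ : ψ f = ψ f' := e1.trans e2.symm
      have hval : ∀ i, f (Tuple.sort f i) = f' (Tuple.sort f' i) := by
        intro i
        have := congrFun eψ i
        simp only [hψ, Fin.mk.injEq] at this
        exact Fin.val_injective (by omega)
      funext x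
      have := hval ((Tuple.sort f).symm x)
      rwa [Equiv.apply_symm_apply, ← hσ, Equiv.apply_symm_apply] at this
    calc k ^ n = Fintype.card (Fin n → Fin k) := by simp
      _ ≤ Fintype.card (Equiv.Perm (Fin n) × {A : Finset (Fin (n+k)) // A.card = n}) := by
          apply Fintype.card_le_of_injective
            (fun f => (Tuple.sort f, ⟨Finset.image (ψ f) Finset.univ, hcardim f⟩))
          intro f f' h
          apply hinj
          simp only [Prod.mk.injEq, Subtype.mk.injEq] at h
          exact Prod.ext h.1 h.2
      _ = n.factorial * (n + k).choose n := by
          rw [Fintype.card_prod, Fintype.card_perm, Fintype.card_fin]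
          congr 1
          rw [Fintype.card_subtype]
          have : Finset.filter (fun A : Finset (Fin (n+k)) => A.card = n) Finset.univ
              = Finset.powersetCard n Finset.univ := by
            ext A
            simp [Finset.mem_powersetCard]
          rw [this, Finset.card_powersetCard, Finset.card_univ, Fintype.card_fin]

end Aux

/-- `degree_{m'}(g,h) = Σ_{k} (1[g_k = m'] + 1[h_k = m'])`. -/
def pairDegree {K M : ℕ} (g h : Fin K → Fin M) (m : Fin M) : ℕ :=
  ∑ k : Fin K, ((if g k = m then 1 else 0) + (if h k = m then 1 else 0))

open Classical in
/-- `𝓔_m`: the set of pairs `(g,h) ∈ 𝓜^K` (i.e. `g_k < h_k` for every `k`) such that every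
cluster has even degree and cluster `m` has positive degree. -/
noncomputable def evenWithCluster (K M : ℕ) (m : Fin M) :
    Finset ((Fin K → Fin M) × (Fin K → Fin M)) :=
  Finset.univ.filter (fun gh =>
    (∀ k, gh.1 k < gh.2 k) ∧
    (∀ m', Even (pairDegree gh.1 gh.2 m')) ∧
    0 < pairDegree gh.1 gh.2 m)

section Aux2

lemma sum_pairDegree {K M : ℕ} (g h : Fin K → Fin M) :
    ∑ m' : Fin M, pairDegree g h m' = 2 * K := by
  unfold pairDegree
  rw [Finset.sum_comm]
  have : ∀ k : Fin K, ∑ m' : Fin M,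
      ((if g k = m' then 1 else 0) + (if h k = m' then 1 else 0)) = 2 := by
    intro k
    rw [Finset.sum_add_distrib]
    simp [Finset.sum_ite_eq]
  rw [Finset.sum_congr rfl fun k _ => this k]
  simp [mul_comm]

lemma support_card_le {K M : ℕ} (g h : Fin K → Fin M)
    (heven : ∀ m', Even (pairDegree g h m')) :
    (Finset.univ.filter (fun m' => 0 < pairDegree g h m')).card ≤ K := by
  set S := Finset.univ.filter (fun m' => 0 < pairDegree g h m') with hS
  have h2 : ∀ m' ∈ S, 2 ≤ pairDegree g h m' := by
    intro m' hm'
    rw [hS, Finset.mem_filter] at hm'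
    obtain ⟨c, hc⟩ := heven m'
    omega
  have hb : S.card * 2 ≤ ∑ m' ∈ S, pairDegree g h m' := by
    simpa using Finset.card_nsmul_le_sum S _ 2 h2
  have hsub : ∑ m' ∈ S, pairDegree g h m' ≤ ∑ m' : Fin M, pairDegree g h m' :=
    Finset.sum_le_sum_of_subset (Finset.subset_univ S)
  rw [sum_pairDegree] at hsub
  omega

lemma mem_support_left {K M : ℕ} (g h : Fin K → Fin M) (k : Fin K) :
    0 < pairDegree g h (g k) := by
  unfold pairDegree
  apply Finset.sum_pos' (fun _ _ => Nat.zero_le _)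
  exact ⟨k, Finset.mem_univ k, by simp⟩

lemma mem_support_right {K M : ℕ} (g h : Fin K → Fin M) (k : Fin K) :
    0 < pairDegree g h (h k) := by
  unfold pairDegree
  apply Finset.sum_pos' (fun _ _ => Nat.zero_le _)
  exact ⟨k, Finset.mem_univ k, by simp⟩

/-- Main counting injection: a pair in `𝓔_m` is determined by its support with `m` removed
(a set of size `< K`) together with, for each `k`, the indices of `g k` and `h k` in the
sorted support. -/
lemma evenWithCluster_card_le (K M : ℕ) (hK : 1 ≤ K) (m : Fin M) :
    (evenWithCluster K M m).card ≤
      (∑ j ∈ Finset.range K, Nat.choose M j) * (K * K) ^ K := by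
  classical
  set B : Finset (Finset (Fin M)) :=
    (Finset.range K).biUnion
      (fun j => Finset.powersetCard j (Finset.univ : Finset (Fin M))) with hB
  set supp : (Fin K → Fin M) × (Fin K → Fin M) → Finset (Fin M) := fun gh =>
    Finset.univ.filter (fun m' => 0 < pairDegree gh.1 gh.2 m') with hsupp
  set idx : (Fin K → Fin M) × (Fin K → Fin M) → Fin M → Fin K := fun gh x =>
    ⟨min (((supp gh).sort (· ≤ ·)).idxOf x) (K - 1), by omega⟩ with hidx
  have hmem : ∀ gh ∈ evenWithCluster K M m,
      (∀ m', Even (pairDegree gh.1 gh.2 m')) ∧ 0 < pairDegree gh.1 gh.2 m := by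
    intro gh hgh
    simp only [evenWithCluster, Finset.mem_filter, Finset.mem_univ, true_and] at hgh
    exact ⟨hgh.2.1, hgh.2.2⟩
  have hcard : ∀ gh ∈ evenWithCluster K M m, (supp gh).card ≤ K := by
    intro gh hgh
    exact support_card_le _ _ (hmem gh hgh).1
  have hmsupp : ∀ gh ∈ evenWithCluster K M m, m ∈ supp gh := by
    intro gh hgh
    simp only [hsupp, Finset.mem_filter, Finset.mem_univ, true_and]
    exact (hmem gh hgh).2
  have hidxval : ∀ gh ∈ evenWithCluster K M m, ∀ x ∈ supp gh,
      (idx gh x).val = (((supp gh).sort (· ≤ ·)).idxOf x) := by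
    intro gh hgh x hx
    have hxL : x ∈ (supp gh).sort (· ≤ ·) := (Finset.mem_sort _).mpr hx
    have h1 : ((supp gh).sort (· ≤ ·)).idxOf x < ((supp gh).sort (· ≤ ·)).length :=
      List.idxOf_lt_length_iff.mpr hxL
    rw [Finset.length_sort] at h1
    have h2 := hcard gh hgh
    simp only [hidx]
    omega
  have key : (evenWithCluster K M m).card ≤
      (B ×ˢ (Finset.univ : Finset (Fin K → Fin K × Fin K))).card := by
    apply Finset.card_le_card_of_injOn
      (fun gh => (Finset.erase (supp gh) m, fun k => (idx gh (gh.1 k), idx gh (gh.2 k))))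
    · -- maps to
      intro gh hgh
      rw [Finset.mem_coe, Finset.mem_product]
      refine ⟨?_, Finset.mem_univ _⟩
      rw [hB, Finset.mem_biUnion]
      refine ⟨((supp gh).erase m).card, ?_, ?_⟩
      · rw [Finset.mem_range, Finset.card_erase_of_mem (hmsupp gh hgh)]
        have h1 := hcard gh hgh
        have h2 := Finset.card_pos.mpr ⟨m, hmsupp gh hgh⟩
        omega
      · rw [Finset.mem_powersetCard]
        exact ⟨Finset.subset_univ _, rfl⟩
    · -- injectivity on the set
      rintro ⟨g, h⟩ hgh ⟨g', h'⟩ hgh' heq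
      rw [Finset.mem_coe] at hgh hgh'
      simp only [Prod.mk.injEq] at heq
      obtain ⟨hT, hF⟩ := heq
      have hS : supp (g, h) = supp (g', h') := by
        rw [← Finset.insert_erase (hmsupp _ hgh), ← Finset.insert_erase (hmsupp _ hgh'), hT]
      have hrec : ∀ (x y : Fin M), x ∈ supp (g, h) → y ∈ supp (g', h') →
          idx (g, h) x = idx (g', h') y → x = y := by
        intro x y hx hy hxy
        have e1 := hidxval _ hgh x hx
        have e2 := hidxval _ hgh' y hy
        rw [← hS] at hy
        rw [← hS] at e2
        have hvaleq : (idx (g, h) x).val = (idx (g', h') y).val := by rw [hxy]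
        have : ((supp (g, h)).sort (· ≤ ·)).idxOf x
            = ((supp (g, h)).sort (· ≤ ·)).idxOf y := by
          rw [← e1, ← e2, hvaleq]
        exact (List.idxOf_inj ((Finset.mem_sort _).mpr hx)).mp this
      have hgsupp : ∀ k, g k ∈ supp (g, h) := by
        intro k
        simp only [hsupp, Finset.mem_filter, Finset.mem_univ, true_and]
        exact mem_support_left g h k
      have hhsupp : ∀ k, h k ∈ supp (g, h) := by
        intro k
        simp only [hsupp, Finset.mem_filter, Finset.mem_univ, true_and]
        exact mem_support_right g h k
      have hgsupp' : ∀ k, g' k ∈ supp (g', h') := by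
        intro k
        simp only [hsupp, Finset.mem_filter, Finset.mem_univ, true_and]
        exact mem_support_left g' h' k
      have hhsupp' : ∀ k, h' k ∈ supp (g', h') := by
        intro k
        simp only [hsupp, Finset.mem_filter, Finset.mem_univ, true_and]
        exact mem_support_right g' h' k
      rw [Prod.mk.injEq]
      constructor
      · funext k
        have := congrFun hF k
        rw [Prod.mk.injEq] at this
        exact hrec _ _ (hgsupp k) (hgsupp' k) this.1
      · funext k
        have := congrFun hF k
        rw [Prod.mk.injEq] at this
        exact hrec _ _ (hhsupp k) (hhsupp' k) this.2
  refine key.trans (le_of_eq ?_)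
  rw [Finset.card_product]
  congr 1
  · rw [hB, Finset.card_biUnion]
    · exact Finset.sum_congr rfl fun j _ => by
        rw [Finset.card_powersetCard, Finset.card_univ, Fintype.card_fin]
    · intro i _ j _ hij
      simp only [Function.onFun, Finset.disjoint_left]
      intro A hA hA'
      rw [Finset.mem_powersetCard] at hA hA'
      exact hij (hA.2 ▸ hA'.2.symm ▸ rfl)
  · rw [Finset.card_univ]
    simp [Fintype.card_fun]

end Aux2

/-- Fix `K ≥ 1`.  There is a constant `C = C(K)` depending only on `K`
such that for every `M ≥ 2` and every `m ∈ [M]`, the cardinality of `𝓔_m` satisfies both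
the explicit bound `(2K)! · binom(3K,2K) · Σ_{ℓ=1}^{K} binom(M,ℓ−1)` and the bound
`C · M^{K−1}`. -/
theorem stmt_14 (K : ℕ) (hK : 1 ≤ K) :
    ∃ C : ℕ, ∀ M : ℕ, 2 ≤ M → ∀ m : Fin M,
      (evenWithCluster K M m).card ≤
        (2 * K).factorial * Nat.choose (3 * K) (2 * K) *
          ∑ ℓ ∈ Finset.Icc 1 K, Nat.choose M (ℓ - 1) ∧
      (evenWithCluster K M m).card ≤ C * M ^ (K - 1) := by
  refine ⟨(2 * K).factorial * Nat.choose (3 * K) (2 * K) * K, ?_⟩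
  intro M hM m
  have hsum_eq : ∑ ℓ ∈ Finset.Icc 1 K, Nat.choose M (ℓ - 1)
      = ∑ j ∈ Finset.range K, Nat.choose M j := by
    rw [← Finset.Ico_add_one_right_eq_Icc, Finset.sum_Ico_eq_sum_range]
    simp
  have h1 := evenWithCluster_card_le K M hK m
  have hKK : (K * K) ^ K ≤ (2 * K).factorial * Nat.choose (3 * K) (2 * K) := by
    have h := pow_le_factorial_mul_choose (2 * K) K
    have h3 : 2 * K + K = 3 * K := by ring
    rw [h3] at h
    have h4 : (K * K) ^ K = K ^ (2 * K) := by
      rw [two_mul, pow_add, mul_pow]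
    rw [h4]
    exact h
  constructor
  · calc (evenWithCluster K M m).card
        ≤ (∑ j ∈ Finset.range K, Nat.choose M j) * (K * K) ^ K := h1
      _ ≤ (∑ j ∈ Finset.range K, Nat.choose M j) *
            ((2 * K).factorial * Nat.choose (3 * K) (2 * K)) :=
          Nat.mul_le_mul_left _ hKK
      _ = (2 * K).factorial * Nat.choose (3 * K) (2 * K) *
            ∑ ℓ ∈ Finset.Icc 1 K, Nat.choose M (ℓ - 1) := by
          rw [hsum_eq, mul_comm]
  · have hsum_le : ∑ j ∈ Finset.range K, Nat.choose M j ≤ K * M ^ (K - 1) := by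
      calc ∑ j ∈ Finset.range K, Nat.choose M j
          ≤ ∑ j ∈ Finset.range K, M ^ (K - 1) := by
            apply Finset.sum_le_sum
            intro j hj
            rw [Finset.mem_range] at hj
            calc Nat.choose M j ≤ M ^ j := Nat.choose_le_pow M j
              _ ≤ M ^ (K - 1) := Nat.pow_le_pow_right (by omega) (by omega)
        _ = K * M ^ (K - 1) := by
            rw [Finset.sum_const, Finset.card_range, smul_eq_mul]
    calc (evenWithCluster K M m).card
        ≤ (∑ j ∈ Finset.range K, Nat.choose M j) * (K * K) ^ K := h1
      _ ≤ (K * M ^ (K - 1)) * ((2 * K).factorial * Nat.choose (3 * K) (2 * K)) :=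
          Nat.mul_le_mul hsum_le hKK
      _ = (2 * K).factorial * Nat.choose (3 * K) (2 * K) * K * M ^ (K - 1) := by ring
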